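/- arXiv:2410.23880 — 3 statements merged into one kernel-verified Lean document; each statement's English description precedes it below -/
import Mathlib

section
/- Let M ≥ 1, let K be a symmetric positive definite real M×M matrix, let 𝟏 ∈ ℝ^M be the all-ones vector, and let y ∈ ℝ^M. For each σ > 0 let x_σ be the unique minimizer over ℝ^M of F_σ(x) = ‖x − y‖₂² + xᵀ(K + σ²·𝟏𝟏ᵀ)⁻¹x. Define A = K⁻¹ − (K⁻¹𝟏)(K⁻¹𝟏)ᵀ/(𝟏ᵀK⁻¹𝟏). Then, as σ → ∞, x_σ converges to the unique minimizer over ℝ^M of G(x) = ‖x − y‖₂² − (1/2)·Σ_{i,j=1}^M (x_i − x_j)²·A_{ij}. -/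
open Matrix Filter Topology Finset

set_option linter.unusedSectionVars false
set_option maxHeartbeats 1000000

namespace Prop1Aux

variable {n : Type*} [Fintype n] [DecidableEq n]

lemma mul_vecMulVec (M : Matrix n n ℝ) (a b : n → ℝ) :
    M * vecMulVec a b = vecMulVec (M *ᵥ a) b := by
  ext i j
  simp only [Matrix.mul_apply, vecMulVec_apply, Matrix.mulVec, dotProduct, Finset.sum_mul]
  exact Finset.sum_congr rfl fun k _ => by ring

lemma vecMulVec_mul (a b : n → ℝ) (M : Matrix n n ℝ) :
    vecMulVec a b * M = vecMulVec a (b ᵥ* M) := by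
  ext i j
  simp only [Matrix.mul_apply, vecMulVec_apply, Matrix.vecMul, dotProduct, Finset.mul_sum]
  exact Finset.sum_congr rfl fun k _ => by ring

lemma vecMulVec_mul_vecMulVec (a b c d : n → ℝ) :
    vecMulVec a b * vecMulVec c d = (b ⬝ᵥ c) • vecMulVec a d := by
  ext i j
  simp only [Matrix.mul_apply, vecMulVec_apply, Matrix.smul_apply, dotProduct,
    smul_eq_mul, Finset.sum_mul]
  exact Finset.sum_congr rfl fun k _ => by ring

lemma vecMulVec_mulVec (a b z : n → ℝ) :
    vecMulVec a b *ᵥ z = (b ⬝ᵥ z) • a := by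
  ext i
  simp only [Matrix.mulVec, vecMulVec_apply, dotProduct, Pi.smul_apply, smul_eq_mul,
    Finset.sum_mul]
  exact Finset.sum_congr rfl fun k _ => by ring

lemma dot_vecMulVec_mulVec (x a b z : n → ℝ) :
    x ⬝ᵥ vecMulVec a b *ᵥ z = (x ⬝ᵥ a) * (b ⬝ᵥ z) := by
  rw [vecMulVec_mulVec, dotProduct_smul, smul_eq_mul, mul_comm]

lemma sym_of_herm {Q : Matrix n n ℝ} (h : Q.IsHermitian) : Qᵀ = Q := by
  rw [← Matrix.conjTranspose_eq_transpose_of_trivial]; exact h.eq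

lemma herm_of_sym {Q : Matrix n n ℝ} (h : Qᵀ = Q) : Q.IsHermitian := by
  rw [Matrix.IsHermitian, Matrix.conjTranspose_eq_transpose_of_trivial]; exact h

lemma swap_dot (Q : Matrix n n ℝ) (hsym : Qᵀ = Q) (a b : n → ℝ) :
    a ⬝ᵥ Q *ᵥ b = b ⬝ᵥ Q *ᵥ a := by
  rw [Matrix.dotProduct_mulVec, ← Matrix.mulVec_transpose, hsym, dotProduct_comm]

lemma quad_le (Q : Matrix n n ℝ) (hsym : Qᵀ = Q) (hpsd : ∀ z, 0 ≤ z ⬝ᵥ Q *ᵥ z)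
    (y c x : n → ℝ) (hc : Q *ᵥ c = y - c) :
    ((∑ i, (c i - y i) ^ 2) + c ⬝ᵥ Q *ᵥ c) ≤ (∑ i, (x i - y i) ^ 2) + x ⬝ᵥ Q *ᵥ x := by
  set d : n → ℝ := x - c with hd
  have hx : x = c + d := by simp [hd]
  have e1 : x ⬝ᵥ Q *ᵥ x = c ⬝ᵥ Q *ᵥ c + 2 * (d ⬝ᵥ Q *ᵥ c) + d ⬝ᵥ Q *ᵥ d := by
    rw [hx]
    simp only [Matrix.mulVec_add, dotProduct_add, add_dotProduct]
    rw [swap_dot Q hsym c d]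
    ring
  have e2 : (∑ i, (x i - y i) ^ 2)
      = (∑ i, (c i - y i) ^ 2) + 2 * (∑ i, d i * (c i - y i)) + ∑ i, d i ^ 2 := by
    rw [hx]
    have h : ∀ i, ((c + d) i - y i) ^ 2
        = (c i - y i) ^ 2 + 2 * (d i * (c i - y i)) + d i ^ 2 := fun i => by
      simp only [Pi.add_apply]; ring
    simp_rw [h, Finset.sum_add_distrib, Finset.mul_sum]
  have e3 : d ⬝ᵥ Q *ᵥ c = ∑ i, d i * (y i - c i) := by
    rw [hc]; simp [dotProduct, Pi.sub_apply]
  have h4 : 2 * (∑ i, d i * (c i - y i)) + 2 * (d ⬝ᵥ Q *ᵥ c) = 0 := by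
    rw [e3, ← mul_add, ← Finset.sum_add_distrib]
    have h : ∀ i, d i * (c i - y i) + d i * (y i - c i) = 0 := fun i => by ring
    simp [h]
  have h5 : 0 ≤ ∑ i, d i ^ 2 := Finset.sum_nonneg fun i _ => sq_nonneg _
  have h6 : 0 ≤ d ⬝ᵥ Q *ᵥ d := hpsd d
  nlinarith [e1, e2]

/-- Unique strict minimizer equals any global minimizer. -/
lemma eq_of_strict_min {α : Type*} (f : α → ℝ) (m c : α)
    (hm : ∀ x, x ≠ m → f m < f x) (hc : ∀ x, f c ≤ f x) : m = c := by
  by_contra h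
  have h1 : f m < f c := hm c (fun hcm => h hcm.symm)
  exact absurd (hc m) (not_le.mpr h1)

end Prop1Aux

open Prop1Aux

open Prop1Aux

/-- Finite-dimensional form of Proposition 1: the unique minimizer of the
σ-regularized least-squares objective converges, as σ → ∞, to the unique
minimizer of the faithfulness-plus-robustness objective with precision matrix
`A = K⁻¹ − (K⁻¹𝟏)(K⁻¹𝟏)ᵀ/(𝟏ᵀK⁻¹𝟏)`. -/
theorem regularized_minimizer_tendsto_pairwise_minimizer
    (M : ℕ) (hM : 1 ≤ M) (K : Matrix (Fin M) (Fin M) ℝ) (hK : K.PosDef)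
    (y : Fin M → ℝ)
    (F : ℝ → (Fin M → ℝ) → ℝ)
    (hF : ∀ σ : ℝ, ∀ x : Fin M → ℝ,
      F σ x = (∑ i, (x i - y i) ^ 2) +
        x ⬝ᵥ ((K + σ ^ 2 • vecMulVec (fun _ => (1 : ℝ)) (fun _ => (1 : ℝ)))⁻¹).mulVec x)
    (G : (Fin M → ℝ) → ℝ)
    (hG : ∀ x : Fin M → ℝ,
      G x = (∑ i, (x i - y i) ^ 2) -
        (1 / 2) * ∑ i, ∑ j, (x i - x j) ^ 2 *
          (K⁻¹ - ((fun _ => (1 : ℝ)) ⬝ᵥ K⁻¹.mulVec (fun _ => (1 : ℝ)))⁻¹ •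
            vecMulVec (K⁻¹.mulVec (fun _ => (1 : ℝ))) (K⁻¹.mulVec (fun _ => (1 : ℝ)))) i j)
    (xσ : ℝ → (Fin M → ℝ))
    (hxσ : ∀ σ : ℝ, 0 < σ → ∀ x : Fin M → ℝ, x ≠ xσ σ → F σ (xσ σ) < F σ x)
    (xG : Fin M → ℝ)
    (hxG : ∀ x : Fin M → ℝ, x ≠ xG → G xG < G x) :
    Tendsto xσ atTop (𝓝 xG) := by
  classical
  set one : Fin M → ℝ := (fun _ => (1 : ℝ)) with hone
  set J : Matrix (Fin M) (Fin M) ℝ := vecMulVec one one with hJ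
  set W : Matrix (Fin M) (Fin M) ℝ := K⁻¹ with hW
  set u : Fin M → ℝ := W.mulVec one with hu
  set s : ℝ := one ⬝ᵥ u with hs
  set P : Matrix (Fin M) (Fin M) ℝ := vecMulVec u u with hP
  set A : Matrix (Fin M) (Fin M) ℝ := W - s⁻¹ • P with hA2
  -- basic facts
  have honez : one ≠ 0 := by
    intro h0
    have h1 := congrFun h0 ⟨0, hM⟩
    simp [hone] at h1
  have hKdet : IsUnit K.det := hK.det_pos.ne'.isUnit
  have hKW : K * W = 1 := by rw [hW]; exact Matrix.mul_nonsing_inv K hKdet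
  have hWpd : W.PosDef := by rw [hW]; exact hK.inv
  have hWsym : Wᵀ = W := sym_of_herm hWpd.1
  have hspos : 0 < s := by
    have h := hWpd.dotProduct_mulVec_pos honez
    rw [hs, hu]
    simpa using h
  have hPsym : Pᵀ = P := by
    rw [hP]; ext i j; simp [Matrix.transpose_apply, vecMulVec_apply, mul_comm]
  have hAsym : Aᵀ = A := by
    rw [hA2, Matrix.transpose_sub, Matrix.transpose_smul, hWsym, hPsym]
  have hKu : K *ᵥ u = one := by
    rw [hu, Matrix.mulVec_mulVec, hKW, Matrix.one_mulVec]
  have huW : one ᵥ* W = u := by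
    rw [hu]
    conv_rhs => rw [← hWsym, Matrix.mulVec_transpose]
  have hJW : J * W = vecMulVec one u := by rw [hJ, Prop1Aux.vecMulVec_mul, huW]
  have hKP : K * P = vecMulVec one u := by rw [hP, Prop1Aux.mul_vecMulVec, hKu]
  have hJP : J * P = s • vecMulVec one u := by
    rw [hJ, hP, Prop1Aux.vecMulVec_mul_vecMulVec, ← hs]
  -- Sherman–Morrison
  have hSM : ∀ σ : ℝ, (K + σ ^ 2 • J)⁻¹ = W - (σ ^ 2 / (1 + σ ^ 2 * s)) • P := by
    intro σ
    have hden : (0 : ℝ) < 1 + σ ^ 2 * s := by nlinarith [sq_nonneg σ]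
    apply Matrix.inv_eq_right_inv
    have expand : (K + σ ^ 2 • J) * (W - (σ ^ 2 / (1 + σ ^ 2 * s)) • P)
        = 1 + (σ ^ 2 - (σ ^ 2 / (1 + σ ^ 2 * s))
            - σ ^ 2 * ((σ ^ 2 / (1 + σ ^ 2 * s)) * s)) • vecMulVec one u := by
      simp only [Matrix.add_mul, Matrix.mul_sub, Matrix.smul_mul, Matrix.mul_smul]
      rw [hKW, hKP, hJW, hJP]
      module
    rw [expand]
    have hco : σ ^ 2 - (σ ^ 2 / (1 + σ ^ 2 * s))
        - σ ^ 2 * ((σ ^ 2 / (1 + σ ^ 2 * s)) * s) = 0 := by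
      field_simp
      ring
    rw [hco, zero_smul, add_zero]
  -- positivity of the regularized matrices
  have hBpd : ∀ σ : ℝ, (K + σ ^ 2 • J).PosDef := by
    intro σ
    refine hK.add_posSemidef (Matrix.PosSemidef.of_dotProduct_mulVec_nonneg (herm_of_sym ?_) ?_)
    · rw [Matrix.transpose_smul, hJ]
      ext i j
      simp [Matrix.transpose_apply, vecMulVec_apply]
    · intro x
      rw [star_trivial, Matrix.smul_mulVec, dotProduct_smul, smul_eq_mul, hJ,
        dot_vecMulVec_mulVec, dotProduct_comm x one]
      exact mul_nonneg (sq_nonneg σ) (mul_self_nonneg _)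
  -- generic minimizer characterization
  have hmin : ∀ Q : Matrix (Fin M) (Fin M) ℝ, Q.PosSemidef →
      ∀ f : (Fin M → ℝ) → ℝ,
      (∀ x, f x = (∑ i, (x i - y i) ^ 2) + x ⬝ᵥ Q *ᵥ x) →
      ∀ m, (∀ x, x ≠ m → f m < f x) → m = (1 + Q)⁻¹ *ᵥ y := by
    intro Q hQ f hf m hm
    have hRpd : (1 + Q).PosDef := Matrix.PosDef.one.add_posSemidef hQ
    set c : Fin M → ℝ := (1 + Q)⁻¹ *ᵥ y with hc
    have h1 : (1 + Q) *ᵥ c = y := by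
      rw [hc, Matrix.mulVec_mulVec, Matrix.mul_nonsing_inv _ hRpd.det_pos.ne'.isUnit,
        Matrix.one_mulVec]
    have h2 : Q *ᵥ c = y - c := by
      rw [Matrix.add_mulVec, Matrix.one_mulVec] at h1
      exact eq_sub_of_add_eq' h1
    have h3 : ∀ x, f c ≤ f x := by
      intro x
      rw [hf, hf]
      exact quad_le Q (sym_of_herm hQ.1) (fun z => by simpa using hQ.dotProduct_mulVec_nonneg z) y c x h2
    exact eq_of_strict_min f m c hm h3
  -- properties of A
  have hA1 : A *ᵥ one = 0 := by
    rw [hA2, Matrix.sub_mulVec, Matrix.smul_mulVec, hP, Prop1Aux.vecMulVec_mulVec,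
      dotProduct_comm u one, ← hs, ← hu, smul_smul, inv_mul_cancel₀ hspos.ne', one_smul,
      sub_self]
  have hApsd : ∀ z, 0 ≤ z ⬝ᵥ A *ᵥ z := by
    intro z
    have eA : z ⬝ᵥ A *ᵥ z = z ⬝ᵥ W *ᵥ z - s⁻¹ * ((u ⬝ᵥ z) * (u ⬝ᵥ z)) := by
      rw [hA2, Matrix.sub_mulVec, dotProduct_sub, Matrix.smul_mulVec, dotProduct_smul,
        hP, dot_vecMulVec_mulVec, smul_eq_mul, dotProduct_comm z u]
    set w : Fin M → ℝ := z - ((u ⬝ᵥ z) / s) • one with hw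
    have h0 : 0 ≤ w ⬝ᵥ W *ᵥ w := by simpa using hWpd.posSemidef.dotProduct_mulVec_nonneg w
    have eW : w ⬝ᵥ W *ᵥ w
        = z ⬝ᵥ W *ᵥ z - 2 * ((u ⬝ᵥ z) / s) * (u ⬝ᵥ z) + ((u ⬝ᵥ z) / s) ^ 2 * s := by
      rw [hw]
      simp only [Matrix.mulVec_sub, Matrix.mulVec_smul, dotProduct_sub, sub_dotProduct,
        dotProduct_smul, smul_dotProduct, smul_eq_mul]
      rw [show one ⬝ᵥ W *ᵥ z = z ⬝ᵥ W *ᵥ one from swap_dot W hWsym one z,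
        show z ⬝ᵥ W *ᵥ one = u ⬝ᵥ z from by rw [← hu, dotProduct_comm],
        show one ⬝ᵥ W *ᵥ one = s from by rw [← hu, ← hs]]
      ring
    have heq : z ⬝ᵥ A *ᵥ z = w ⬝ᵥ W *ᵥ w := by
      rw [eA, eW]
      field_simp
      ring
    rw [heq]; exact h0
  have hAherm : A.IsHermitian := herm_of_sym hAsym
  -- rewrite G in quadratic form
  have hG2 : ∀ x, G x = (∑ i, (x i - y i) ^ 2) + x ⬝ᵥ A *ᵥ x := by
    intro x
    have hrow : ∀ i, ∑ j, A i j = 0 := by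
      intro i
      have h := congrFun hA1 i
      simpa [Matrix.mulVec, dotProduct, hone] using h
    have hsym' : ∀ i j, A j i = A i j := by
      intro i j
      have h := congrFun (congrFun hAsym i) j
      simpa [Matrix.transpose_apply] using h
    have hcol : ∀ j, ∑ i, A i j = 0 := by
      intro j
      rw [show (∑ i, A i j) = ∑ i, A j i from Finset.sum_congr rfl fun i _ => hsym' j i]
      exact hrow j
    have hdot : x ⬝ᵥ A *ᵥ x = ∑ i, ∑ j, x i * A i j * x j := by
      simp only [dotProduct, Matrix.mulVec]
      exact Finset.sum_congr rfl fun i _ => by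
        rw [Finset.mul_sum]
        exact Finset.sum_congr rfl fun j _ => by ring
    have hkey : (∑ i, ∑ j, (x i - x j) ^ 2 * A i j) = -(2 * (x ⬝ᵥ A *ᵥ x)) := by
      have e : ∀ i j : Fin M, (x i - x j) ^ 2 * A i j
          = x i ^ 2 * A i j - 2 * (x i * A i j * x j) + x j ^ 2 * A i j := fun i j => by ring
      simp_rw [e, Finset.sum_add_distrib, Finset.sum_sub_distrib]
      have t1 : ∀ i : Fin M, ∑ j, x i ^ 2 * A i j = 0 := fun i => by
        rw [← Finset.mul_sum, hrow i, mul_zero]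
      have t3 : (∑ i, ∑ j, x j ^ 2 * A i j) = 0 := by
        rw [Finset.sum_comm]
        have h : ∀ j : Fin M, ∑ i, x j ^ 2 * A i j = 0 := fun j => by
          rw [← Finset.mul_sum, hcol j, mul_zero]
        simp [h]
      have t2 : (∑ i, ∑ j, 2 * (x i * A i j * x j)) = 2 * (x ⬝ᵥ A *ᵥ x) := by
        rw [hdot, Finset.mul_sum]
        exact Finset.sum_congr rfl fun i _ => by rw [Finset.mul_sum]
      rw [t3]
      simp only [t1, Finset.sum_const_zero, zero_sub, add_zero]
      rw [t2]
    rw [hG x, hkey]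
    ring
  -- identify the limit point
  have hApsd' : A.PosSemidef := Matrix.PosSemidef.of_dotProduct_mulVec_nonneg hAherm fun z => by rw [star_trivial]; exact hApsd z
  have hxGeq : xG = (1 + A)⁻¹ *ᵥ y := hmin A hApsd' G hG2 xG hxG
  -- identify the minimizers along the way
  have hxσeq : ∀ σ : ℝ, 0 < σ →
      xσ σ = (1 + (W - (σ ^ 2 / (1 + σ ^ 2 * s)) • P))⁻¹ *ᵥ y := by
    intro σ hσ
    have hQpd : ((K + σ ^ 2 • J)⁻¹).PosDef := (hBpd σ).inv
    have h := hmin ((K + σ ^ 2 • J)⁻¹) hQpd.posSemidef (F σ) (hF σ) (xσ σ) (hxσ σ hσ)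
    rwa [hSM σ] at h
  -- the scalar limit
  have hlim_c : Tendsto (fun σ : ℝ => σ ^ 2 / (1 + σ ^ 2 * s)) atTop (𝓝 s⁻¹) := by
    have h2 : Tendsto (fun σ : ℝ => (σ ^ 2)⁻¹ + s) atTop (𝓝 (0 + s)) :=
      ((tendsto_pow_atTop two_ne_zero).inv_tendsto_atTop).add tendsto_const_nhds
    have h3 : Tendsto (fun σ : ℝ => ((σ ^ 2)⁻¹ + s)⁻¹) atTop (𝓝 (0 + s)⁻¹) :=
      h2.inv₀ (by simpa using hspos.ne')
    rw [zero_add] at h3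
    refine Tendsto.congr' ?_ h3
    filter_upwards [eventually_gt_atTop 0] with σ hσ
    have h0 : σ ≠ 0 := hσ.ne'
    rw [eq_comm, div_eq_iff (by nlinarith [sq_nonneg σ] : (1 : ℝ) + σ ^ 2 * s ≠ 0)]
    field_simp
  -- the matrix limit
  have hlimM : Tendsto (fun σ : ℝ => 1 + (W - (σ ^ 2 / (1 + σ ^ 2 * s)) • P)) atTop
      (𝓝 (1 + A)) := by
    rw [hA2]
    exact tendsto_const_nhds.add (tendsto_const_nhds.sub (hlim_c.smul tendsto_const_nhds))
  have h1Apd : (1 + A).PosDef := Matrix.PosDef.one.add_posSemidef hApsd'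
  have hcont_inv : ContinuousAt Inv.inv (1 + A) := by
    apply continuousAt_matrix_inv
    exact NormedRing.inverse_continuousAt (Units.mk0 _ h1Apd.det_pos.ne')
  have hlim_inv : Tendsto (fun σ : ℝ => (1 + (W - (σ ^ 2 / (1 + σ ^ 2 * s)) • P))⁻¹) atTop
      (𝓝 (1 + A)⁻¹) := hcont_inv.tendsto.comp hlimM
  have hcm : Continuous (fun N : Matrix (Fin M) (Fin M) ℝ => N *ᵥ y) :=
    continuous_id.matrix_mulVec continuous_const
  have hlim_vec : Tendsto (fun σ : ℝ => (1 + (W - (σ ^ 2 / (1 + σ ^ 2 * s)) • P))⁻¹ *ᵥ y)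
      atTop (𝓝 ((1 + A)⁻¹ *ᵥ y)) := (hcm.tendsto _).comp hlim_inv
  rw [hxGeq]
  refine Tendsto.congr' ?_ hlim_vec
  filter_upwards [eventually_gt_atTop 0] with σ hσ
  exact (hxσeq σ hσ).symm
end

section
/- Let M ≥ 1, let K be a symmetric positive definite real M×M matrix, let 𝟏 ∈ ℝ^M be the all-ones vector, and let A = K⁻¹ − (K⁻¹𝟏)(K⁻¹𝟏)ᵀ / (𝟏ᵀK⁻¹𝟏). Then for x ∈ ℝ^M one has Ax = 0 if and only if x is a scalar multiple of 𝟏; in particular A𝟏 = 0. -/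
open Matrix

lemma aux_vecMulVec_mulVec {M : ℕ} (w v x : Fin M → ℝ) :
    (vecMulVec w v).mulVec x = (v ⬝ᵥ x) • w := by
  funext i
  simp only [mulVec, dotProduct, vecMulVec_apply, Pi.smul_apply, smul_eq_mul,
    Finset.sum_mul, Finset.mul_sum]
  congr 1; funext j; ring

/-- The null space of `A = K⁻¹ − (K⁻¹𝟏)(K⁻¹𝟏)ᵀ/(𝟏ᵀK⁻¹𝟏)` is exactly the span of
the all-ones vector; in particular `A𝟏 = 0`. -/
theorem limit_precision_matrix_kernel
    (M : ℕ) (hM : 1 ≤ M) (K : Matrix (Fin M) (Fin M) ℝ) (hK : K.PosDef) :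
    (∀ x : Fin M → ℝ,
      (K⁻¹ - ((fun _ => (1 : ℝ)) ⬝ᵥ K⁻¹.mulVec (fun _ => (1 : ℝ)))⁻¹ •
        vecMulVec (K⁻¹.mulVec (fun _ => (1 : ℝ))) (K⁻¹.mulVec (fun _ => (1 : ℝ)))).mulVec x = 0 ↔
      ∃ c : ℝ, x = c • (fun _ => (1 : ℝ))) ∧
    (K⁻¹ - ((fun _ => (1 : ℝ)) ⬝ᵥ K⁻¹.mulVec (fun _ => (1 : ℝ)))⁻¹ •
        vecMulVec (K⁻¹.mulVec (fun _ => (1 : ℝ))) (K⁻¹.mulVec (fun _ => (1 : ℝ)))).mulVec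
      (fun _ => (1 : ℝ)) = 0 := by
  set e : Fin M → ℝ := fun _ => (1 : ℝ) with he
  set v : Fin M → ℝ := K⁻¹.mulVec e with hv
  set s : ℝ := e ⬝ᵥ v with hs
  have hinv : K⁻¹.PosDef := hK.inv
  have he0 : e ≠ 0 := by
    intro h
    have : e ⟨0, hM⟩ = 0 := by rw [h]; rfl
    simp [he] at this
  have hspos : 0 < s := by
    have := hinv.dotProduct_mulVec_pos he0
    simpa [hs, hv, dotProduct] using this
  have hsne : s ≠ 0 := ne_of_gt hspos
  have hdet : IsUnit K.det := hK.det_pos.ne'.isUnit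
  have hKv : K.mulVec v = e := by
    rw [hv, mulVec_mulVec, mul_nonsing_inv K hdet, one_mulVec]
  have hve : v ⬝ᵥ e = s := by rw [hs, dotProduct_comm]
  have key : ∀ x : Fin M → ℝ,
      (K⁻¹ - s⁻¹ • vecMulVec v v).mulVec x = K⁻¹.mulVec x - (s⁻¹ * (v ⬝ᵥ x)) • v := by
    intro x
    rw [sub_mulVec, smul_mulVec, aux_vecMulVec_mulVec, smul_smul]
  constructor
  · intro x
    constructor
    · intro hx
      rw [key x, sub_eq_zero] at hx
      refine ⟨s⁻¹ * (v ⬝ᵥ x), ?_⟩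
      have := congrArg K.mulVec hx
      rw [mulVec_mulVec, mul_nonsing_inv K hdet, one_mulVec, mulVec_smul, hKv] at this
      exact this
    · rintro ⟨c, rfl⟩
      rw [key]
      have h1 : K⁻¹.mulVec (c • e) = c • v := by rw [mulVec_smul, hv]
      have h2 : v ⬝ᵥ (c • e) = c * s := by rw [dotProduct_smul, hve, smul_eq_mul]
      rw [h1, h2]
      have : s⁻¹ * (c * s) = c := by field_simp
      rw [this, sub_self]
  · rw [key]
    have h2 : v ⬝ᵥ e = s := hve
    rw [h2]
    have : s⁻¹ * s = 1 := inv_mul_cancel₀ hsne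
    rw [this, one_smul, hv, sub_self]
end

section
/- Let M ≥ 1, let K be a symmetric positive definite real M×M matrix, let 𝟏 ∈ ℝ^M be the all-ones vector, and let A = K⁻¹ − (K⁻¹𝟏)(K⁻¹𝟏)ᵀ / (𝟏ᵀK⁻¹𝟏). Then for x ∈ ℝ^M, xᵀAx = 0 if and only if x is a scalar multiple of 𝟏. -/
open Matrix

lemma vecMulVec_mulVec' {M : ℕ} (a b x : Fin M → ℝ) :
    (vecMulVec a b).mulVec x = (b ⬝ᵥ x) • a := by
  ext i
  simp [vecMulVec, mulVec, dotProduct, Finset.mul_sum, mul_assoc, mul_comm, mul_left_comm]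

/-- The quadratic form of `A = K⁻¹ − (K⁻¹𝟏)(K⁻¹𝟏)ᵀ/(𝟏ᵀK⁻¹𝟏)` vanishes exactly
on the constant explanations, i.e. the scalar multiples of the all-ones vector. -/
theorem limit_precision_quadratic_form_eq_zero_iff
    (M : ℕ) (hM : 1 ≤ M) (K : Matrix (Fin M) (Fin M) ℝ) (hK : K.PosDef)
    (x : Fin M → ℝ) :
    x ⬝ᵥ (K⁻¹ - ((fun _ => (1 : ℝ)) ⬝ᵥ K⁻¹.mulVec (fun _ => (1 : ℝ)))⁻¹ •
        vecMulVec (K⁻¹.mulVec (fun _ => (1 : ℝ))) (K⁻¹.mulVec (fun _ => (1 : ℝ)))).mulVec x = 0 ↔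
    ∃ c : ℝ, x = c • (fun _ => (1 : ℝ)) := by
  set B := K⁻¹ with hBdef
  set u : Fin M → ℝ := fun _ => (1 : ℝ) with hu
  have hB : B.PosDef := hK.inv
  have hBsym : Bᵀ = B := by
    have := hB.isHermitian
    simpa [Matrix.IsHermitian, Matrix.conjTranspose_eq_transpose_of_trivial] using this
  have hune : u ≠ 0 := by
    intro h
    have : u ⟨0, hM⟩ = 0 := by rw [h]; rfl
    simp [hu] at this
  have hs : 0 < u ⬝ᵥ B.mulVec u := by
    simpa using hB.dotProduct_mulVec_pos hune
  have hsne : u ⬝ᵥ B.mulVec u ≠ 0 := ne_of_gt hs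
  -- symmetry of the bilinear form
  have hsymm : ∀ v w : Fin M → ℝ, v ⬝ᵥ B.mulVec w = w ⬝ᵥ B.mulVec v := by
    intro v w
    rw [dotProduct_mulVec, ← Matrix.mulVec_transpose, hBsym, dotProduct_comm]
  set s := u ⬝ᵥ B.mulVec u with hsdef
  set c := (u ⬝ᵥ B.mulVec x) / s with hcdef
  set z := x - c • u with hzdef
  have key : x ⬝ᵥ (B - s⁻¹ • vecMulVec (B.mulVec u) (B.mulVec u)).mulVec x
      = z ⬝ᵥ B.mulVec z := by
    rw [hzdef]
    rw [Matrix.sub_mulVec, Matrix.smul_mulVec, vecMulVec_mulVec',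
      Matrix.mulVec_sub, Matrix.mulVec_smul]
    have h1 : B.mulVec u ⬝ᵥ x = x ⬝ᵥ B.mulVec u := dotProduct_comm _ _
    have h2 : x ⬝ᵥ B.mulVec u = u ⬝ᵥ B.mulVec x := hsymm x u
    simp only [dotProduct_sub, sub_dotProduct, dotProduct_smul, smul_dotProduct,
      smul_eq_mul, h1, h2]
    rw [hcdef, hsdef]
    have hsne' : u ⬝ᵥ B.mulVec u ≠ 0 := hsne
    field_simp
    ring
  rw [key]
  constructor
  · intro h0
    have hz0 : z = 0 := by
      by_contra hz
      have hpos : 0 < z ⬝ᵥ B.mulVec z := by simpa using hB.dotProduct_mulVec_pos hz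
      exact hpos.ne' h0
    exact ⟨c, by rw [← sub_eq_zero]; exact hz0⟩
  · rintro ⟨d, hd⟩
    have hzz : z = 0 := by
      rw [hzdef, hcdef, hd]
      have h3 : u ⬝ᵥ B.mulVec (d • u) = d * s := by
        rw [Matrix.mulVec_smul, dotProduct_smul, smul_eq_mul]
      rw [h3, mul_div_assoc, div_self hsne, mul_one]
      simp
    rw [hzz]; simp
end
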